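/- For any finite tree T on vertices {1,...,k+1}, the set Δ_T(C_{1/3} × C_{1/3}) = { (|x^i − x^j|)_{i∼j} : x^1,...,x^{k+1} ∈ C_{1/3} × C_{1/3}, x^i ≠ x^j } ⊂ ℝ^k has non-empty interior, where C_{1/3} is the standard middle thirds Cantor set. -/

import Mathlib

open Set

/-- A Cantor set: a non-empty compact, perfect, totally disconnected subset of ℝ. -/
def IsCantorSet (K : Set ℝ) : Prop :=
  K.Nonempty ∧ IsCompact K ∧ Perfect K ∧ IsTotallyDisconnected K

/-- `(a,b)` is a bounded gap of `K`: a bounded connected component of the complement. -/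
def IsGap (K : Set ℝ) (a b : ℝ) : Prop :=
  a < b ∧ a ∈ K ∧ b ∈ K ∧ Set.Ioo a b ∩ K = ∅

/-- Left endpoints of gaps to the right of `u` of length at least `ℓ` (or the right extreme of `K`). -/
def rightTargets (K : Set ℝ) (u ℓ : ℝ) : Set ℝ :=
  {a | u < a ∧ ((∃ b, IsGap K a b ∧ ℓ ≤ b - a) ∨ a = sSup K)}

/-- Right endpoints of gaps to the left of `u` of length at least `ℓ` (or the left extreme of `K`). -/
def leftTargets (K : Set ℝ) (u ℓ : ℝ) : Set ℝ :=
  {b | b < u ∧ ((∃ a, IsGap K a b ∧ ℓ ≤ b - a) ∨ b = sInf K)}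

/-- The set of bridge/gap ratios of `K` at endpoints of bounded gaps. -/
def thicknessValues (K : Set ℝ) : Set ℝ :=
  {r | ∃ a b, IsGap K a b ∧
    (r = (sInf (rightTargets K b (b - a)) - b) / (b - a) ∨
     r = (a - sSup (leftTargets K a (b - a))) / (b - a))}

/-- Newhouse thickness of `K`. -/
noncomputable def thickness (K : Set ℝ) : ℝ := sInf (thicknessValues K)

def rightTargetsEps (K : Set ℝ) (ε u ℓ : ℝ) : Set ℝ :=
  {a | u < a ∧ ((∃ b, IsGap K a b ∧ (1 - ε) * ℓ < b - a) ∨ a = sSup K)}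

def leftTargetsEps (K : Set ℝ) (ε u ℓ : ℝ) : Set ℝ :=
  {b | b < u ∧ ((∃ a, IsGap K a b ∧ (1 - ε) * ℓ < b - a) ∨ b = sInf K)}

def epsThicknessValues (K : Set ℝ) (ε : ℝ) : Set ℝ :=
  {r | ∃ a b, IsGap K a b ∧
    (r = (sInf (rightTargetsEps K ε b (b - a)) - b) / (b - a) ∨
     r = (a - sSup (leftTargetsEps K ε a (b - a))) / (b - a))}

/-- The `ε`-thickness of `K`. -/
noncomputable def epsThickness (K : Set ℝ) (ε : ℝ) : ℝ := sInf (epsThicknessValues K ε)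

/-- Two bounded subsets of ℝ are linked if the interiors of their convex hulls intersect
but neither is contained in the other. -/
def Linked (K1 K2 : Set ℝ) : Prop :=
  (Set.Ioo (sInf K1) (sSup K1) ∩ Set.Ioo (sInf K2) (sSup K2)).Nonempty ∧
  ¬ Set.Ioo (sInf K1) (sSup K1) ⊆ Set.Ioo (sInf K2) (sSup K2) ∧
  ¬ Set.Ioo (sInf K2) (sSup K2) ⊆ Set.Ioo (sInf K1) (sSup K1)

/-- The standard middle-thirds Cantor set. -/
noncomputable def cantorThirds : Set ℝ :=
  ⋂ n : ℕ,
    (fun S : Set ℝ => (fun x : ℝ => x / 3) '' S ∪ (fun x : ℝ => x / 3 + 2/3) '' S)^[n]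
      (Set.Icc 0 1)

/-- A section of the middle-thirds Cantor set: a scaled translated copy of it sitting inside it. -/
def IsCantorSection (S : Set ℝ) : Prop :=
  ∃ (n : ℕ) (a : ℝ), S = (fun x : ℝ => a + x / 3 ^ n) '' cantorThirds ∧ S ⊆ cantorThirds

/-- The open wedge at `x`. -/
def Wedge (x : ℝ × ℝ) : Set (ℝ × ℝ) :=
  {y | y.2 - x.2 < y.1 - x.1 ∧ y.1 - x.1 < 3 * (y.2 - x.2)}

namespace CantorAux


def Fmap (S : Set ℝ) : Set ℝ := (fun x : ℝ => x / 3) '' S ∪ (fun x : ℝ => x / 3 + 2/3) '' S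

def Eset (n : ℕ) : Set ℝ := Fmap^[n] (Set.Icc 0 1)

lemma cantor_eq : cantorThirds = ⋂ n, Eset n := rfl

lemma Eset_zero : Eset 0 = Icc 0 1 := rfl

lemma Eset_succ (n : ℕ) : Eset (n+1) = Fmap (Eset n) := Function.iterate_succ_apply' _ _ _

lemma Fmap_mono : Monotone Fmap := by
  intro S T h
  exact union_subset_union (image_mono h) (image_mono h)

lemma Fmap_sub : Fmap (Icc 0 1) ⊆ Icc 0 1 := by
  rintro x (⟨y, hy, rfl⟩ | ⟨y, hy, rfl⟩) <;> simp only [mem_Icc] at * <;> constructor <;> linarith [hy.1, hy.2]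

lemma Eset_antitone : ∀ n, Eset (n+1) ⊆ Eset n := by
  intro n
  induction n with
  | zero => rw [Eset_succ, Eset_zero]; exact Fmap_sub
  | succ m ih => rw [Eset_succ, Eset_succ m]; exact Fmap_mono (by rw [← Eset_succ]; exact ih)

lemma Eset_sub_Icc : ∀ n, Eset n ⊆ Icc 0 1 := by
  intro n
  induction n with
  | zero => exact subset_rfl
  | succ m ih => exact (Eset_antitone m).trans ih

lemma Eset_compact : ∀ n, IsCompact (Eset n) := by
  intro n
  induction n with
  | zero => exact isCompact_Icc
  | succ m ih =>
    rw [Eset_succ]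
    exact (ih.image (by continuity)).union (ih.image (by continuity))

lemma Eset_symm : ∀ n, ∀ x ∈ Eset n, 1 - x ∈ Eset n := by
  intro n
  induction n with
  | zero => intro x hx; simp only [Eset_zero, mem_Icc] at *; constructor <;> linarith [hx.1, hx.2]
  | succ m ih =>
    intro x hx
    rw [Eset_succ] at *
    rcases hx with ⟨y, hy, rfl⟩ | ⟨y, hy, rfl⟩
    · exact Or.inr ⟨1 - y, ih y hy, by ring⟩
    · exact Or.inl ⟨1 - y, ih y hy, by ring⟩

lemma mem_cantor_iff {x : ℝ} : x ∈ cantorThirds ↔ ∀ n, x ∈ Eset n := by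
  rw [cantor_eq]; exact mem_iInter

lemma cantor_sub_Icc : cantorThirds ⊆ Icc 0 1 := fun x hx => Eset_sub_Icc 0 (mem_cantor_iff.mp hx 0)

lemma cantor_symm {x : ℝ} (hx : x ∈ cantorThirds) : 1 - x ∈ cantorThirds := by
  rw [mem_cantor_iff] at *
  exact fun n => Eset_symm n x (hx n)

lemma cantor_left {x : ℝ} (hx : x ∈ cantorThirds) : x / 3 ∈ cantorThirds := by
  rw [mem_cantor_iff] at *
  intro n
  cases n with
  | zero => have := Eset_sub_Icc 0 (hx 0); simp only [Eset_zero, mem_Icc] at *; constructor <;> linarith [this.1, this.2]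
  | succ m => rw [Eset_succ]; exact Or.inl ⟨x, hx m, rfl⟩

lemma cantor_right {x : ℝ} (hx : x ∈ cantorThirds) : x / 3 + 2/3 ∈ cantorThirds := by
  rw [mem_cantor_iff] at *
  intro n
  cases n with
  | zero => have := Eset_sub_Icc 0 (hx 0); simp only [Eset_zero, mem_Icc] at *; constructor <;> linarith [this.1, this.2]
  | succ m => rw [Eset_succ]; exact Or.inr ⟨x, hx m, rfl⟩

lemma zero_mem : (0:ℝ) ∈ cantorThirds := by
  rw [mem_cantor_iff]
  intro n
  induction n with
  | zero => simp [Eset_zero]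
  | succ m ih => rw [Eset_succ]; exact Or.inl ⟨0, ih, by norm_num⟩








/-- Controlled-increment property on [0,1]. -/
def Ctrl (f : ℝ → ℝ) (m M : ℝ) : Prop :=
  ∀ x y : ℝ, 0 ≤ x → x ≤ y → y ≤ 1 → m * (y - x) ≤ f y - f x ∧ f y - f x ≤ M * (y - x)

lemma Ctrl.continuousOn {f : ℝ → ℝ} {m M : ℝ} (hm : 0 < m) (h : Ctrl f m M) :
    ContinuousOn f (Icc 0 1) := by
  have hM : 0 ≤ M := by
    have := h 0 1 le_rfl zero_le_one le_rfl
    nlinarith [this.1, this.2]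
  have : LipschitzOnWith (Real.toNNReal M) f (Icc 0 1) := by
    rw [lipschitzOnWith_iff_dist_le_mul]
    intro x hx y hy
    rw [Real.dist_eq, Real.dist_eq, Real.coe_toNNReal _ hM]
    simp only [mem_Icc] at hx hy
    rcases le_total x y with hxy | hxy
    · have := h x y hx.1 hxy hy.2
      rw [abs_of_nonpos (by nlinarith [this.1]), abs_of_nonpos (by linarith)]
      nlinarith [this.2]
    · have := h y x hy.1 hxy hx.2
      rw [abs_of_nonneg (by nlinarith [this.1]), abs_of_nonneg (by linarith)]
      nlinarith [this.2]
  exact this.continuousOn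

lemma Ctrl.comp_left {f : ℝ → ℝ} {m M : ℝ} (h : Ctrl f m M) :
    Ctrl (fun x => f (x/3)) (m/3) (M/3) := by
  intro x y hx hxy hy
  have := h (x/3) (y/3) (by linarith) (by linarith) (by linarith)
  constructor <;> nlinarith [this.1, this.2]

lemma Ctrl.comp_right {f : ℝ → ℝ} {m M : ℝ} (h : Ctrl f m M) :
    Ctrl (fun x => f (x/3 + 2/3)) (m/3) (M/3) := by
  intro x y hx hxy hy
  have := h (x/3 + 2/3) (y/3 + 2/3) (by linarith) (by linarith) (by linarith)
  constructor <;> nlinarith [this.1, this.2]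

lemma sum_lemma : ∀ (n : ℕ) (f g : ℝ → ℝ) (m₁ M₁ m₂ M₂ : ℝ),
    0 < m₂ → M₂ ≤ m₁ → M₁ ≤ 3 * m₂ →
    Ctrl f m₁ M₁ → Ctrl g m₂ M₂ →
    ∀ v : ℝ, f 0 + g 0 ≤ v → v ≤ f 1 + g 1 →
    ∃ s ∈ Eset n, ∃ u ∈ Eset n, f s + g u = v := by
  intro n
  induction n with
  | zero =>
    intro f g m₁ M₁ m₂ M₂ hm₂ hM₂m₁ hM₁ hf hg v hv1 hv2
    have hm₁ : 0 < m₁ := by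
      have := hg 0 1 le_rfl zero_le_one le_rfl
      nlinarith [this.1, this.2]
    have hfc := Ctrl.continuousOn hm₁ hf
    have hgc := Ctrl.continuousOn hm₂ hg
    rw [Eset_zero]
    by_cases hc : v ≤ f 1 + g 0
    · have : v ∈ Icc ((fun x => f x + g 0) 0) ((fun x => f x + g 0) 1) := ⟨hv1, hc⟩
      obtain ⟨s, hs, hsv⟩ := intermediate_value_Icc zero_le_one (hfc.add continuousOn_const) this
      exact ⟨s, hs, 0, by simp, hsv⟩
    · push_neg at hc
      have : v ∈ Icc ((fun u => f 1 + g u) 0) ((fun u => f 1 + g u) 1) := ⟨hc.le, hv2⟩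
      obtain ⟨u, hu, huv⟩ := intermediate_value_Icc zero_le_one (continuousOn_const.add hgc) this
      exact ⟨1, by simp, u, hu, huv⟩
  | succ n ih =>
    intro f g m₁ M₁ m₂ M₂ hm₂ hM₂m₁ hM₁ hf hg v hv1 hv2
    have hm₁ : 0 < m₁ := by
      have := hg 0 1 le_rfl zero_le_one le_rfl
      nlinarith [this.1, this.2]
    -- increment facts
    have hf1 := hf 0 (1/3) le_rfl (by norm_num) (by norm_num)
    have hf2 := hf (1/3) (2/3) (by norm_num) (by norm_num) (by norm_num)
    have hf3 := hf (2/3) 1 (by norm_num) (by norm_num) (by norm_num)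
    have hg1 := hg 0 (1/3) le_rfl (by norm_num) (by norm_num)
    have hg2 := hg (1/3) (2/3) (by norm_num) (by norm_num) (by norm_num)
    have hg3 := hg (2/3) 1 (by norm_num) (by norm_num) (by norm_num)
    have key : ∀ (f' g' : ℝ → ℝ), Ctrl f' (m₁/3) (M₁/3) → Ctrl g' (m₂/3) (M₂/3) →
        f' 0 + g' 0 ≤ v → v ≤ f' 1 + g' 1 →
        ∃ s ∈ Eset n, ∃ u ∈ Eset n, f' s + g' u = v := by
      intro f' g' hfc hgc h1 h2
      exact ih f' g' (m₁/3) (M₁/3) (m₂/3) (M₂/3) (by linarith) (by linarith) (by linarith) hfc hgc v h1 h2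
    have memL : ∀ s ∈ Eset n, s/3 ∈ Eset (n+1) := by
      intro s hs; rw [Eset_succ]; exact Or.inl ⟨s, hs, rfl⟩
    have memR : ∀ s ∈ Eset n, s/3 + 2/3 ∈ Eset (n+1) := by
      intro s hs; rw [Eset_succ]; exact Or.inr ⟨s, hs, rfl⟩
    by_cases c1 : v ≤ f (1/3) + g (1/3)
    · obtain ⟨s, hs, u, hu, huv⟩ := key (fun x => f (x/3)) (fun x => g (x/3))
        hf.comp_left hg.comp_left (by norm_num; linarith) (by norm_num; linarith)
      exact ⟨s/3, memL s hs, u/3, memL u hu, huv⟩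
    by_cases c2 : v ≤ f (1/3) + g 1
    · obtain ⟨s, hs, u, hu, huv⟩ := key (fun x => f (x/3)) (fun x => g (x/3 + 2/3))
        hf.comp_left hg.comp_right (by norm_num; nlinarith) (by norm_num; linarith)
      exact ⟨s/3, memL s hs, u/3 + 2/3, memR u hu, huv⟩
    by_cases c3 : v ≤ f 1 + g (1/3)
    · obtain ⟨s, hs, u, hu, huv⟩ := key (fun x => f (x/3 + 2/3)) (fun x => g (x/3))
        hf.comp_right hg.comp_left (by norm_num; nlinarith) (by norm_num; linarith)
      exact ⟨s/3 + 2/3, memR s hs, u/3, memL u hu, huv⟩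
    · obtain ⟨s, hs, u, hu, huv⟩ := key (fun x => f (x/3 + 2/3)) (fun x => g (x/3 + 2/3))
        hf.comp_right hg.comp_right (by norm_num; nlinarith) (by norm_num; linarith)
      exact ⟨s/3 + 2/3, memR s hs, u/3 + 2/3, memR u hu, huv⟩










lemma limit_lemma (f g : ℝ → ℝ) (hfc : Continuous f) (hgc : Continuous g) (v : ℝ)
    (h : ∀ n, ∃ s ∈ Eset n, ∃ u ∈ Eset n, f s + g u = v) :
    ∃ s ∈ cantorThirds, ∃ u ∈ cantorThirds, f s + g u = v := by
  set K : ℕ → Set (ℝ × ℝ) := fun n => (Eset n ×ˢ Eset n) ∩ {p : ℝ × ℝ | f p.1 + g p.2 = v} with hK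
  have hcl : ∀ n, IsClosed (K n) :=
    fun n => (((Eset_compact n).isClosed.prod (Eset_compact n).isClosed)).inter
      (isClosed_eq (by fun_prop) continuous_const)
  have hcomp : IsCompact (K 0) :=
    (((Eset_compact 0).prod (Eset_compact 0))).inter_right
      (isClosed_eq (by fun_prop) continuous_const)
  have hanti : ∀ n, K (n+1) ⊆ K n := by
    intro n
    exact inter_subset_inter (prod_mono (Eset_antitone n) (Eset_antitone n)) subset_rfl
  have hne : ∀ n, (K n).Nonempty := by
    intro n
    obtain ⟨s, hs, u, hu, huv⟩ := h n
    exact ⟨(s, u), ⟨⟨hs, hu⟩, huv⟩⟩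
  obtain ⟨p, hp⟩ := IsCompact.nonempty_iInter_of_sequence_nonempty_isCompact_isClosed K hanti hne hcomp hcl
  simp only [mem_iInter] at hp
  refine ⟨p.1, mem_cantor_iff.mpr (fun n => (hp n).1.1), p.2, mem_cantor_iff.mpr (fun n => (hp n).1.2), (hp 0).2⟩

/-- The core quadratic reachability lemma. η = 1/81, a ∈ [53/81, 54/81], b ∈ [23/81, 24/81]. -/
lemma core_lemma (a b : ℝ) (ha1 : 53/81 ≤ a) (ha2 : a ≤ 54/81) (hb1 : 23/81 ≤ b) (hb2 : b ≤ 24/81)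
    (t : ℝ) (ht1 : a^2 + b^2 ≤ t) (ht2 : t ≤ (a + 1/81)^2 + (b + 1/81)^2) :
    ∃ s ∈ cantorThirds, ∃ u ∈ cantorThirds, (a + s/81)^2 + (b + u/81)^2 = t := by
  set f : ℝ → ℝ := fun s => (a + s/81)^2 with hf
  set g : ℝ → ℝ := fun u => (b + u/81)^2 with hg
  have hfC : Ctrl f (2*a/81) ((2*a + 2/81)/81) := by
    intro x y hx hxy hy
    simp only [hf]
    constructor <;> nlinarith
  have hgC : Ctrl g (2*b/81) ((2*b + 2/81)/81) := by
    intro x y hx hxy hy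
    simp only [hg]
    constructor <;> nlinarith
  have hsum : ∀ n, ∃ s ∈ Eset n, ∃ u ∈ Eset n, f s + g u = t := by
    intro n
    apply sum_lemma n f g (2*a/81) ((2*a + 2/81)/81) (2*b/81) ((2*b + 2/81)/81)
      (by nlinarith) (by nlinarith) (by nlinarith) hfC hgC
    · simpa [hf, hg] using ht1
    · simp only [hf, hg]
      calc t ≤ (a + 1/81)^2 + (b + 1/81)^2 := ht2
        _ = (a + 1/81)^2 + (b + 1/81)^2 := rfl
        _ = (a + 1/81)^2 + (b + 1/81)^2 := rfl
  have := limit_lemma f g (by fun_prop) (by fun_prop) t hsum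
  simpa [hf, hg] using this





lemma reach (σ τ : ℝ) (hσ1 : 0 ≤ σ) (hσ2 : σ ≤ 1) (hτ1 : 0 ≤ τ) (hτ2 : τ ≤ 1)
    (hθ : 54/81*σ + 24/81*τ ≤ 309/405) (t : ℝ)
    (ht1 : 3494/6561 ≤ t) (ht2 : t ≤ 3492/6561 + 2/405) :
    ∃ s ∈ cantorThirds, ∃ u ∈ cantorThirds,
      ((54/81 - σ/81) + s/81)^2 + ((24/81 - τ/81) + u/81)^2 = t := by
  apply core_lemma (54/81 - σ/81) (24/81 - τ/81) (by linarith) (by linarith) (by linarith) (by linarith)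
  · nlinarith [sq_nonneg (1-σ), sq_nonneg (1-τ), sq_nonneg σ, sq_nonneg τ]
  · nlinarith [sq_nonneg (1-σ), sq_nonneg (1-τ)]

def sq2 (e f : ℝ) : Set (ℝ × ℝ) :=
  {p | ∃ s ∈ cantorThirds, ∃ u ∈ cantorThirds, p = (e + s/81, f + u/81)}

def Pset : Set (ℝ × ℝ) := sq2 0 (54/81) ∪ sq2 (54/81) (78/81) ∪ sq2 (78/81) (24/81) ∪ sq2 (24/81) 0

lemma ne_of_pos_dist {q p : ℝ × ℝ} {t : ℝ} (ht : 0 < t)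
    (h : (q.1 - p.1)^2 + (q.2 - p.2)^2 = t) : q ≠ p := by
  rintro rfl
  simp at h
  linarith

lemma pin : ∀ p ∈ Pset, ∀ t : ℝ, 3494/6561 ≤ t → t ≤ 3492/6561 + 2/405 →
    ∃ q ∈ Pset, q ≠ p ∧ (q.1 - p.1)^2 + (q.2 - p.2)^2 = t := by
  have ht0 : ∀ t : ℝ, 3494/6561 ≤ t → (0:ℝ) < t := fun t h => by linarith
  rintro p hp t ht1 ht2
  rcases hp with ((⟨s₀, hs₀, u₀, hu₀, rfl⟩ | ⟨s₀, hs₀, u₀, hu₀, rfl⟩) | ⟨s₀, hs₀, u₀, hu₀, rfl⟩) | ⟨s₀, hs₀, u₀, hu₀, rfl⟩ <;>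
    obtain ⟨hs₀1, hs₀2⟩ := cantor_sub_Icc hs₀ <;>
    obtain ⟨hu₀1, hu₀2⟩ := cantor_sub_Icc hu₀
  -- D₁ : base (0, 54/81)
  · by_cases hθ : 54/81*s₀ + 24/81*u₀ ≤ 309/405
    · obtain ⟨s, hs, u, hu, heq⟩ := reach s₀ u₀ hs₀1 hs₀2 hu₀1 hu₀2 hθ t ht1 ht2
      refine ⟨(54/81 + s/81, 78/81 + u/81), Or.inl (Or.inl (Or.inr ⟨s, hs, u, hu, rfl⟩)),
        ne_of_pos_dist (ht0 t ht1) ?_, ?_⟩ <;> linear_combination heq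
    · obtain ⟨s, hs, u, hu, heq⟩ := reach (1-u₀) s₀ (by linarith) (by linarith) hs₀1 hs₀2
        (by push_neg at hθ; linarith) t ht1 ht2
      refine ⟨(24/81 + u/81, (1-s)/81), Or.inr ⟨u, hu, 1-s, cantor_symm hs, by norm_num⟩,
        ne_of_pos_dist (ht0 t ht1) ?_, ?_⟩ <;> linear_combination heq
  -- D₂ : base (54/81, 78/81)
  · by_cases hθ : 54/81*(1-s₀) + 24/81*(1-u₀) ≤ 309/405
    · obtain ⟨s, hs, u, hu, heq⟩ := reach (1-s₀) (1-u₀) (by linarith) (by linarith) (by linarith) (by linarith) hθ t ht1 ht2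
      refine ⟨((1-s)/81, 54/81 + (1-u)/81), Or.inl (Or.inl (Or.inl ⟨1-s, cantor_symm hs, 1-u, cantor_symm hu, by norm_num⟩)),
        ne_of_pos_dist (ht0 t ht1) ?_, ?_⟩ <;> linear_combination heq
    · obtain ⟨s, hs, u, hu, heq⟩ := reach (1-u₀) s₀ (by linarith) (by linarith) hs₀1 hs₀2
        (by push_neg at hθ; linarith) t ht1 ht2
      refine ⟨(78/81 + u/81, 24/81 + (1-s)/81), Or.inl (Or.inr ⟨u, hu, 1-s, cantor_symm hs, rfl⟩),
        ne_of_pos_dist (ht0 t ht1) ?_, ?_⟩ <;> linear_combination heq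
  -- D₃ : base (78/81, 24/81)
  · by_cases hθ : 54/81*(1-s₀) + 24/81*(1-u₀) ≤ 309/405
    · obtain ⟨s, hs, u, hu, heq⟩ := reach (1-s₀) (1-u₀) (by linarith) (by linarith) (by linarith) (by linarith) hθ t ht1 ht2
      refine ⟨(24/81 + (1-s)/81, (1-u)/81), Or.inr ⟨1-s, cantor_symm hs, 1-u, cantor_symm hu, by norm_num⟩,
        ne_of_pos_dist (ht0 t ht1) ?_, ?_⟩ <;> linear_combination heq
    · obtain ⟨s, hs, u, hu, heq⟩ := reach u₀ (1-s₀) hu₀1 hu₀2 (by linarith) (by linarith)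
        (by push_neg at hθ; linarith) t ht1 ht2
      refine ⟨(54/81 + (1-u)/81, 78/81 + s/81), Or.inl (Or.inl (Or.inr ⟨1-u, cantor_symm hu, s, hs, rfl⟩)),
        ne_of_pos_dist (ht0 t ht1) ?_, ?_⟩ <;> linear_combination heq
  -- D₄ : base (24/81, 0)
  · by_cases hθ : 54/81*s₀ + 24/81*u₀ ≤ 309/405
    · obtain ⟨s, hs, u, hu, heq⟩ := reach s₀ u₀ hs₀1 hs₀2 hu₀1 hu₀2 hθ t ht1 ht2
      refine ⟨(78/81 + s/81, 24/81 + u/81), Or.inl (Or.inr ⟨s, hs, u, hu, by norm_num⟩),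
        ne_of_pos_dist (ht0 t ht1) ?_, ?_⟩ <;> linear_combination heq
    · obtain ⟨s, hs, u, hu, heq⟩ := reach u₀ (1-s₀) hu₀1 hu₀2 (by linarith) (by linarith)
        (by push_neg at hθ; linarith) t ht1 ht2
      refine ⟨((1-u)/81, 54/81 + s/81), Or.inl (Or.inl (Or.inl ⟨1-u, cantor_symm hu, s, hs, by norm_num⟩)),
        ne_of_pos_dist (ht0 t ht1) ?_, ?_⟩ <;> linear_combination heq










noncomputable def dlo : ℝ := Real.sqrt (3494/6561)
noncomputable def dhi : ℝ := Real.sqrt (3492/6561 + 2/405)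

lemma dlo_pos : 0 < dlo := Real.sqrt_pos.mpr (by norm_num)
lemma dlo_lt_dhi : dlo < dhi := by
  apply Real.sqrt_lt_sqrt (by norm_num) (by norm_num)

lemma head_mem (h : ℝ) (hh : h = 0 ∨ h = 54/81 ∨ h = 78/81 ∨ h = 24/81) {s : ℝ}
    (hs : s ∈ cantorThirds) : h + s/81 ∈ cantorThirds := by
  rcases hh with rfl | rfl | rfl | rfl
  · have := cantor_left (cantor_left (cantor_left (cantor_left hs)))
    have e : s/3/3/3/3 = 0 + s/81 := by ring
    rwa [e] at this
  · have := cantor_right (cantor_left (cantor_left (cantor_left hs)))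
    have e : s/3/3/3/3 + 2/3 = 54/81 + s/81 := by ring
    rwa [e] at this
  · have := cantor_right (cantor_right (cantor_right (cantor_left hs)))
    have e : ((s/3/3 + 2/3)/3 + 2/3)/3 + 2/3 = 78/81 + s/81 := by ring
    rwa [e] at this
  · have := cantor_left (cantor_right (cantor_right (cantor_left hs)))
    have e : ((s/3/3 + 2/3)/3 + 2/3)/3 = 24/81 + s/81 := by ring
    rwa [e] at this

lemma Pset_sub : Pset ⊆ cantorThirds ×ˢ cantorThirds := by
  rintro p (((⟨s, hs, u, hu, rfl⟩ | ⟨s, hs, u, hu, rfl⟩) | ⟨s, hs, u, hu, rfl⟩) | ⟨s, hs, u, hu, rfl⟩) <;>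
    exact ⟨head_mem _ (by norm_num) hs, head_mem _ (by norm_num) hu⟩

lemma p₀_mem : ((0:ℝ), (54/81:ℝ)) ∈ Pset :=
  Or.inl (Or.inl (Or.inl ⟨0, zero_mem, 0, zero_mem, by norm_num⟩))

open Classical in
noncomputable def nextP (p : ℝ × ℝ) (d : ℝ) : ℝ × ℝ :=
  if h : p ∈ Pset ∧ 3494/6561 ≤ d^2 ∧ d^2 ≤ 3492/6561 + 2/405 then
    (pin p h.1 (d^2) h.2.1 h.2.2).choose
  else p

lemma nextP_spec {p : ℝ × ℝ} (hp : p ∈ Pset) {d : ℝ} (h1 : dlo < d) (h2 : d < dhi) :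
    nextP p d ∈ Pset ∧ nextP p d ≠ p ∧
      ((nextP p d).1 - p.1)^2 + ((nextP p d).2 - p.2)^2 = d^2 := by
  have hd0 : 0 ≤ d := le_trans dlo_pos.le h1.le
  have hsq1 : (3494/6561 : ℝ) ≤ d^2 := by
    have : dlo^2 ≤ d^2 := by nlinarith [dlo_pos]
    rw [dlo, Real.sq_sqrt (by norm_num)] at this
    linarith
  have hsq2 : d^2 ≤ 3492/6561 + 2/405 := by
    have hdh : 0 ≤ dhi := Real.sqrt_nonneg _
    have : d^2 ≤ dhi^2 := by nlinarith
    rw [dhi, Real.sq_sqrt (by norm_num)] at this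
    linarith
  have hcond : p ∈ Pset ∧ 3494/6561 ≤ d^2 ∧ d^2 ≤ 3492/6561 + 2/405 := ⟨hp, hsq1, hsq2⟩
  rw [nextP]
  rw [dif_pos hcond]
  obtain ⟨hq, hne, heq⟩ := (pin p hcond.1 (d^2) hcond.2.1 hcond.2.2).choose_spec
  exact ⟨hq, hne, heq⟩

section Graph
open SimpleGraph

variable {k : ℕ}

noncomputable def place (G : SimpleGraph (Fin (k+1))) (f : G.edgeSet → ℝ) :
    {a b : Fin (k+1)} → G.Walk a b → ℝ × ℝ → ℝ × ℝ
  | _, _, SimpleGraph.Walk.nil, P => P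
  | _, _, @SimpleGraph.Walk.cons _ _ a c _ h w, P =>
      place G f w (nextP P (f ⟨s(a, c), G.mem_edgeSet.mpr h⟩))

lemma place_nil (G : SimpleGraph (Fin (k+1))) (f : G.edgeSet → ℝ) {a : Fin (k+1)} (P : ℝ × ℝ) :
    place G f (SimpleGraph.Walk.nil : G.Walk a a) P = P := rfl

lemma place_cons (G : SimpleGraph (Fin (k+1))) (f : G.edgeSet → ℝ) {a c b : Fin (k+1)}
    (h : G.Adj a c) (w : G.Walk c b) (P : ℝ × ℝ) :
    place G f (SimpleGraph.Walk.cons h w) P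
      = place G f w (nextP P (f ⟨s(a, c), G.mem_edgeSet.mpr h⟩)) := rfl

lemma place_append (G : SimpleGraph (Fin (k+1))) (f : G.edgeSet → ℝ) :
    ∀ {a b c : Fin (k+1)} (p : G.Walk a b) (q : G.Walk b c) (P : ℝ × ℝ),
    place G f (p.append q) P = place G f q (place G f p P) := by
  intro a b c p
  induction p with
  | nil => intro q P; rw [SimpleGraph.Walk.nil_append, place_nil]
  | cons h w ih =>
    intro q P
    rw [SimpleGraph.Walk.cons_append, place_cons, place_cons]
    exact ih q _

lemma place_mem (G : SimpleGraph (Fin (k+1))) (f : G.edgeSet → ℝ)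
    (hf : ∀ e, dlo < f e ∧ f e < dhi) :
    ∀ {a b : Fin (k+1)} (w : G.Walk a b) (P : ℝ × ℝ), P ∈ Pset → place G f w P ∈ Pset := by
  intro a b w
  induction w with
  | nil => intro P hP; rwa [place_nil]
  | cons h w ih =>
    intro P hP
    rw [place_cons]
    exact ih _ (nextP_spec hP (hf _).1 (hf _).2).1

end Graph

end CantorAux

open CantorAux SimpleGraph in
/-- interior of tree distance sets for the middle-thirds Cantor set. -/
theorem tree_distance_interior_middle_thirds
    (k : ℕ) (G : SimpleGraph (Fin (k + 1))) (hT : G.IsTree) :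
    (interior {f : G.edgeSet → ℝ |
      ∃ x : Fin (k + 1) → ℝ × ℝ, (∀ i, x i ∈ cantorThirds ×ˢ cantorThirds) ∧
        (∀ i j, G.Adj i j → x i ≠ x j) ∧
        ∀ i j, (h : G.Adj i j) →
          f ⟨s(i, j), G.mem_edgeSet.mpr h⟩ =
            Real.sqrt (((x i).1 - (x j).1) ^ 2 + ((x i).2 - (x j).2) ^ 2)}).Nonempty := by
  set S := {f : G.edgeSet → ℝ |
      ∃ x : Fin (k + 1) → ℝ × ℝ, (∀ i, x i ∈ cantorThirds ×ˢ cantorThirds) ∧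
        (∀ i j, G.Adj i j → x i ≠ x j) ∧
        ∀ i j, (h : G.Adj i j) →
          f ⟨s(i, j), G.mem_edgeSet.mpr h⟩ =
            Real.sqrt (((x i).1 - (x j).1) ^ 2 + ((x i).2 - (x j).2) ^ 2)} with hS
  set U : Set (G.edgeSet → ℝ) := Set.pi univ (fun _ => Ioo dlo dhi) with hU
  have hUopen : IsOpen U := isOpen_set_pi finite_univ (fun _ _ => isOpen_Ioo)
  have hUne : (fun _ => (dlo + dhi)/2 : G.edgeSet → ℝ) ∈ U := by
    intro e _
    constructor <;> [linarith [dlo_lt_dhi]; linarith [dlo_lt_dhi]]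
  have hUS : U ⊆ S := by
    intro f hf
    have hfe : ∀ e, dlo < f e ∧ f e < dhi := fun e => hf e (mem_univ e)
    obtain ⟨-, hup⟩ := (isTree_iff_existsUnique_path).mp hT
    set r : Fin (k+1) := 0 with hr
    let pathTo : ∀ v, G.Walk r v := fun v => (hup r v).choose
    have pathTo_isPath : ∀ v, (pathTo v).IsPath := fun v => (hup r v).choose_spec.1
    have path_unique : ∀ v (q : G.Walk r v), q.IsPath → q = pathTo v :=
      fun v q hq => (hup r v).choose_spec.2 q hq
    have key : ∀ i j (h : G.Adj i j),
        pathTo j = (pathTo i).append (Walk.cons h Walk.nil) ∨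
        pathTo i = (pathTo j).append (Walk.cons h.symm Walk.nil) := by
      intro i j h
      by_cases hc : j ∈ (pathTo i).support
      · right
        have htake : ((pathTo i).takeUntil j hc).IsPath := (pathTo_isPath i).takeUntil hc
        have hdrop : ((pathTo i).dropUntil j hc).IsPath := (pathTo_isPath i).dropUntil hc
        have hsingle : (Walk.cons h.symm (Walk.nil : G.Walk i i)).IsPath := by
          rw [Walk.cons_isPath_iff]
          exact ⟨Walk.IsPath.nil, by simp [h.ne']⟩
        have e1 : (pathTo i).takeUntil j hc = pathTo j := path_unique j _ htake
        have e2 : (pathTo i).dropUntil j hc = Walk.cons h.symm Walk.nil := by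
          have a1 := (hup j i).choose_spec.2 _ hdrop
          have a2 := (hup j i).choose_spec.2 _ hsingle
          rw [a1, a2]
        calc pathTo i = ((pathTo i).takeUntil j hc).append ((pathTo i).dropUntil j hc) :=
              (Walk.take_spec _ hc).symm
          _ = (pathTo j).append (Walk.cons h.symm Walk.nil) := by rw [e1, e2]
      · left
        have hpath : (((pathTo i)).append (Walk.cons h Walk.nil)).IsPath := by
          rw [Walk.isPath_def, Walk.support_append]
          simp only [Walk.support_cons, Walk.support_nil, List.tail_cons]
          rw [List.nodup_append]
          refine ⟨(pathTo_isPath i).support_nodup, List.nodup_singleton j, ?_⟩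
          intro a ha b hb hab
          simp only [List.mem_singleton] at hb
          subst hb
          exact hc (hab ▸ ha)
        exact (path_unique j _ hpath).symm
    set x : Fin (k+1) → ℝ × ℝ := fun v => place G f (pathTo v) ((0:ℝ), (54/81:ℝ)) with hx
    have hxP : ∀ v, x v ∈ Pset := fun v => place_mem G f hfe (pathTo v) _ p₀_mem
    have hedge : ∀ i j (h : G.Adj i j),
        x j = nextP (x i) (f ⟨s(i,j), G.mem_edgeSet.mpr h⟩) ∨
        x i = nextP (x j) (f ⟨s(j,i), G.mem_edgeSet.mpr h.symm⟩) := by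
      intro i j h
      rcases key i j h with hk | hk
      · left
        show place G f (pathTo j) _ = _
        rw [hk, place_append, place_cons]
        rfl
      · right
        show place G f (pathTo i) _ = _
        rw [hk, place_append, place_cons]
        rfl
    have hswap : ∀ (i j : Fin (k+1)) (h : G.Adj i j),
        (⟨s(i,j), G.mem_edgeSet.mpr h⟩ : G.edgeSet) = ⟨s(j,i), G.mem_edgeSet.mpr h.symm⟩ :=
      fun i j h => Subtype.ext Sym2.eq_swap
    refine ⟨x, fun i => Pset_sub (hxP i), ?_, ?_⟩
    · intro i j h
      rcases hedge i j h with hk | hk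
      · have := (nextP_spec (hxP i) (hfe ⟨s(i,j), G.mem_edgeSet.mpr h⟩).1
          (hfe ⟨s(i,j), G.mem_edgeSet.mpr h⟩).2).2.1
        rw [← hk] at this
        exact this.symm
      · have := (nextP_spec (hxP j) (hfe ⟨s(j,i), G.mem_edgeSet.mpr h.symm⟩).1
          (hfe ⟨s(j,i), G.mem_edgeSet.mpr h.symm⟩).2).2.1
        rw [← hk] at this
        exact this
    · intro i j h
      rcases hedge i j h with hk | hk
      · set e : G.edgeSet := ⟨s(i,j), G.mem_edgeSet.mpr h⟩ with he
        have sp := (nextP_spec (hxP i) (hfe e).1 (hfe e).2).2.2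
        rw [← hk] at sp
        rw [show ((x i).1 - (x j).1)^2 + ((x i).2 - (x j).2)^2 = (f e)^2 by linear_combination sp]
        exact (Real.sqrt_sq (le_trans dlo_pos.le (hfe e).1.le)).symm
      · rw [hswap i j h]
        set e : G.edgeSet := ⟨s(j,i), G.mem_edgeSet.mpr h.symm⟩ with he
        have sp := (nextP_spec (hxP j) (hfe e).1 (hfe e).2).2.2
        rw [← hk] at sp
        rw [show ((x i).1 - (x j).1)^2 + ((x i).2 - (x j).2)^2 = (f e)^2 by linear_combination sp]
        exact (Real.sqrt_sq (le_trans dlo_pos.le (hfe e).1.le)).symm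
  exact ⟨_, interior_maximal hUS hUopen hUne⟩
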